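/- Let M be a finitely generated free abelian group, σ a convex cone in M ⊗ ℝ containing 0, and H a linear hyperplane of M ⊗ ℝ defined over the rationals. Set σ_H = σ ∩ H and M_H = M ∩ H. Then the monoid algebra k[σ_H ∩ M_H] is a direct summand, as a k[σ_H ∩ M_H]-module, of k[σ ∩ M]; in particular if k[σ ∩ M] is split-F-regular then so is k[σ_H ∩ M_H]. -/

import Mathlib

/-- `R` is split-F-regular: for every nonzero `c ∈ R` there exist `e > 0` and an `R`-linear
map `F^e_* R → R` sending `F^e_* c` to `1`, encoded as an additive map `φ : R → R` with
`φ (a ^ p ^ e * b) = a * φ b` and `φ c = 1`. -/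
def SplitFRegular (R : Type*) [CommRing R] (p : ℕ) : Prop :=
  ∀ c : R, c ≠ 0 → ∃ e : ℕ, 0 < e ∧ ∃ φ : R →+ R,
    (∀ a b : R, φ (a ^ p ^ e * b) = a * φ b) ∧ φ c = 1

/-- Let `σ ⊆ ℝ^d` be a convex cone containing `0` and `H` a rational linear hyperplane.
With `S = σ ∩ ℤ^d` and `S_H = (σ ∩ H) ∩ (ℤ^d ∩ H)`, the monoid algebra `k[S_H]` is a direct
summand of `k[S]` as a `k[S_H]`-module (there is a retraction of the inclusion which is
`k[S_H]`-linear); in particular if `k[S]` is split-F-regular then so is `k[S_H]`. -/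
theorem hyperplane_section_direct_summand {d : ℕ} (k : Type*) [Field k] (p : ℕ)
    [Fact p.Prime] [CharP k p] (σ : Set (Fin d → ℝ))
    (hcone : ∀ x ∈ σ, ∀ t : ℝ, 0 < t → t • x ∈ σ) (hconv : Convex ℝ σ)
    (h0 : (0 : Fin d → ℝ) ∈ σ)
    (H : Submodule ℝ (Fin d → ℝ))
    (hHhyp : ∃ φ : (Fin d → ℝ) →ₗ[ℝ] ℝ, φ ≠ 0 ∧ H = LinearMap.ker φ)
    (hHrat : ∃ A ⊆ {w : Fin d → ℝ | ∀ j, ∃ q : ℚ, w j = (q : ℝ)}, H = Submodule.span ℝ A)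
    (S SH : AddSubmonoid (Fin d → ℤ))
    (hS : ∀ m : Fin d → ℤ, m ∈ S ↔ (fun i => (m i : ℝ)) ∈ σ)
    (hSH : ∀ m : Fin d → ℤ, m ∈ SH ↔
      ((fun i => (m i : ℝ)) ∈ σ ∧ (fun i => (m i : ℝ)) ∈ H))
    (hle : SH ≤ S) :
    (∃ π : AddMonoidAlgebra k S →+ AddMonoidAlgebra k SH,
        (∀ g : AddMonoidAlgebra k SH,
          π (AddMonoidAlgebra.mapDomainRingHom k (AddSubmonoid.inclusion hle) g) = g) ∧
        (∀ (g : AddMonoidAlgebra k SH) (f : AddMonoidAlgebra k S),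
          π (AddMonoidAlgebra.mapDomainRingHom k (AddSubmonoid.inclusion hle) g * f) =
            g * π f)) ∧
      (SplitFRegular (AddMonoidAlgebra k S) p → SplitFRegular (AddMonoidAlgebra k SH) p) := by
  classical
  -- the inclusion map
  set ι : SH →+ S := AddSubmonoid.inclusion hle with hιdef
  have hιcoe : ∀ x : SH, ((ι x : S) : Fin d → ℤ) = (x : Fin d → ℤ) := fun x => rfl
  have hι : Function.Injective ι := fun a b h => by
    apply Subtype.ext; rw [← hιcoe a, ← hιcoe b, h]
  -- the real cast is additive and subtractive
  have hcast : ∀ m n : Fin d → ℤ,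
      (fun i => (((m + n) : Fin d → ℤ) i : ℝ)) =
        (fun i => (m i : ℝ)) + fun i => (n i : ℝ) := by
    intro m n; funext i; simp
  -- key fact: for s ∈ SH and t ∈ S, s + t ∈ SH iff t ∈ SH
  have key : ∀ (s : SH) (t : S), ((ι s + t : S) : Fin d → ℤ) ∈ SH ↔ (t : Fin d → ℤ) ∈ SH := by
    intro s t
    have hsH : (fun i => ((s : Fin d → ℤ) i : ℝ)) ∈ H := ((hSH _).mp s.2).2
    constructor
    · intro h
      have hH : (fun i => (((ι s + t : S) : Fin d → ℤ) i : ℝ)) ∈ H := ((hSH _).mp h).2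
      have this : (fun i => (((s : Fin d → ℤ) + (t : Fin d → ℤ)) i : ℝ)) ∈ H := hH
      rw [hcast] at this
      have htH : (fun i => ((t : Fin d → ℤ) i : ℝ)) ∈ H := by
        have := H.sub_mem this hsH
        simpa using this
      exact (hSH _).mpr ⟨(hS _).mp t.2, htH⟩
    · intro h
      have htH : (fun i => ((t : Fin d → ℤ) i : ℝ)) ∈ H := ((hSH _).mp h).2
      refine (hSH _).mpr ⟨(hS _).mp (ι s + t).2, ?_⟩
      show (fun i => (((s : Fin d → ℤ) + (t : Fin d → ℤ)) i : ℝ)) ∈ H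
      rw [hcast]
      exact H.add_mem hsH htH
  -- the projection
  set π : AddMonoidAlgebra k S →+ AddMonoidAlgebra k SH :=
    AddMonoidAlgebra.comapDomainAddMonoidHom ι hι with hπdef
  have hπ_apply : ∀ (f : AddMonoidAlgebra k S) (x : SH), (π f).coeff x = f.coeff (ι x) := fun f x => rfl
  -- retraction property
  have hretr : ∀ g : AddMonoidAlgebra k SH,
      π (AddMonoidAlgebra.mapDomainRingHom k ι g) = g := by
    intro g
    ext x
    rw [hπ_apply]
    show (Finsupp.mapDomain ι g.coeff) (ι x) = g.coeff x
    exact Finsupp.mapDomain_apply hι g.coeff x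
  -- π of a single not in the range is 0
  have hπ_single_notin : ∀ (u : S) (b : k), (u : Fin d → ℤ) ∉ SH →
      π (AddMonoidAlgebra.single u b) = 0 := by
    intro u b hu
    ext x
    rw [hπ_apply]
    have : u ≠ ι x := by
      intro h; exact hu (h ▸ (x.2 : (x : Fin d → ℤ) ∈ SH))
    simp [AddMonoidAlgebra.coeff_single, Finsupp.single_apply, this]
  have hπ_single_in : ∀ (x : SH) (b : k),
      π (AddMonoidAlgebra.single (ι x) b) = AddMonoidAlgebra.single x b := by
    intro x b
    ext y
    rw [hπ_apply]
    simp [AddMonoidAlgebra.coeff_single, Finsupp.single_apply, hι.eq_iff]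
  -- linearity over k[SH]
  have hlin : ∀ (g : AddMonoidAlgebra k SH) (f : AddMonoidAlgebra k S),
      π (AddMonoidAlgebra.mapDomainRingHom k ι g * f) = g * π f := by
    intro g f
    induction g using AddMonoidAlgebra.induction_linear with
    | zero => simp
    | add g₁ g₂ h₁ h₂ => rw [map_add, add_mul, map_add, h₁, h₂, add_mul]
    | single s a =>
      induction f using AddMonoidAlgebra.induction_linear with
      | zero => simp
      | add f₁ f₂ h₁ h₂ => rw [mul_add, map_add, h₁, h₂, map_add, mul_add]
      | single t b =>
        have hmap : AddMonoidAlgebra.mapDomainRingHom k ι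
            (AddMonoidAlgebra.single s a : AddMonoidAlgebra k SH) = AddMonoidAlgebra.single (ι s) a := by
          show AddMonoidAlgebra.mapDomain ι _ = _
          exact AddMonoidAlgebra.mapDomain_single
        rw [hmap, AddMonoidAlgebra.single_mul_single]
        by_cases ht : (t : Fin d → ℤ) ∈ SH
        · set t' : SH := ⟨(t : Fin d → ℤ), ht⟩ with ht'
          have htt : t = ι t' := rfl
          rw [htt, ← map_add, hπ_single_in, hπ_single_in, AddMonoidAlgebra.single_mul_single]
        · rw [hπ_single_notin t b ht, mul_zero, hπ_single_notin]
          intro h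
          exact ht ((key s t).mp h)
  refine ⟨⟨π, hretr, hlin⟩, ?_⟩
  -- split F-regularity descends
  intro hSFR c hc
  have hinj : Function.Injective (AddMonoidAlgebra.mapDomainRingHom k ι :
      AddMonoidAlgebra k SH →+* AddMonoidAlgebra k S) := by
    intro a b h
    have := congrArg π h
    rwa [hretr, hretr] at this
  have hc' : (AddMonoidAlgebra.mapDomainRingHom k ι c : AddMonoidAlgebra k S) ≠ 0 := by
    intro h
    exact hc (hinj (by rw [h, map_zero]))
  obtain ⟨e, he, φ, hφ, hφc⟩ := hSFR _ hc'
  refine ⟨e, he, π.comp (φ.comp (AddMonoidAlgebra.mapDomainRingHom k ι).toAddMonoidHom),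
    ?_, ?_⟩
  · intro a b
    simp only [AddMonoidHom.comp_apply, RingHom.toAddMonoidHom_eq_coe,
      AddMonoidHom.coe_coe]
    rw [map_mul, map_pow, hφ, hlin]
  · simp only [AddMonoidHom.comp_apply, RingHom.toAddMonoidHom_eq_coe,
      AddMonoidHom.coe_coe, hφc]
    have : (1 : AddMonoidAlgebra k S) = AddMonoidAlgebra.mapDomainRingHom k ι 1 := by
      rw [map_one]
    rw [this, hretr]
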